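/- Let 𝓔(B) = Q(𝒫Λ(A+B)𝒫 − 𝒫Λ(A)𝒫) be the projected relative forward map of the continuum model, defined on 𝒲 intersected with the open ball of radius c_A. Under the assumption that 𝓕 = 𝒫DΛ(A;·)𝒫 restricted to 𝒲 is injective with closed complemented range 𝒴 = 𝓕(𝒲), there exist open neighbourhoods of the origin U_𝒲 ⊂ 𝒲 and U_𝒴 ⊂ 𝒴 such that 𝓔 restricted to U_𝒲 is a bijection onto U_𝒴 with analytic inverse. -/

import Mathlib

/- Statement 15: the projected relative forward map
`𝓔(B) = Q(𝒫Λ(A+B)𝒫 − 𝒫Λ(A)𝒫)`, defined on `𝒲` intersected with the ball of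
radius `c_A`, restricts to a bijection between open neighbourhoods of the
origin `U_𝒲 ⊂ 𝒲` and `U_𝒴 ⊂ 𝒴` with analytic inverse, provided
`𝓕 = 𝒫DΛ(A;·)𝒫` is injective on `𝒲` with closed (complemented) range
`𝒴 = 𝓕(𝒲)`.  `W` stands for the coefficient subspace `𝒲`, `Z` for the Banach
space `L_C(𝒳)` of compact operators, `Lam : W → Z` for `B ↦ 𝒫Λ(A+B)𝒫` (which
is analytic on the ball of radius `c_A`), `Y ≤ Z` for `𝒴`, and `Q' : Z →L Y`
for the projection `Q` onto `𝒴` (corestricted to `Y`). -/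

noncomputable section

theorem stmt15
    {W Z : Type*} [NormedAddCommGroup W] [NormedSpace ℂ W] [CompleteSpace W]
    [NormedAddCommGroup Z] [NormedSpace ℂ Z] [CompleteSpace Z]
    (cA : ℝ) (hcA : 0 < cA)
    (Lam : W → Z)
    (hLam : AnalyticOnNhd ℂ Lam (Metric.ball (0 : W) cA))
    -- Assumption: `𝓕 = D(𝒫Λ(A+·)𝒫)(0)` is injective on `𝒲` …
    (hinj : Function.Injective (fderiv ℂ Lam 0))
    -- … and `𝒴 = 𝓕(𝒲)` is a closed (complemented) subspace
    (Y : Submodule ℂ Z)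
    (hYrange : (Y : Set Z) = Set.range (fderiv ℂ Lam 0))
    (hYclosed : IsClosed (Y : Set Z))
    -- the projection `Q` onto `𝒴`
    (Q' : Z →L[ℂ] Y) (hQ' : ∀ z : Y, Q' (z : Z) = z) :
    ∃ (UW : Set W) (UY : Set Y),
      IsOpen UW ∧ IsOpen UY ∧ (0 : W) ∈ UW ∧ (0 : Y) ∈ UY ∧
      UW ⊆ Metric.ball (0 : W) cA ∧
      Set.InjOn (fun B => Q' (Lam B - Lam 0)) UW ∧
      (fun B => Q' (Lam B - Lam 0)) '' UW = UY ∧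
      ∃ G : Y → W, AnalyticOnNhd ℂ G UY ∧
        (∀ B ∈ UW, G (Q' (Lam B - Lam 0)) = B) ∧
        (∀ y ∈ UY, Q' (Lam (G y) - Lam 0) = y) := by
  haveI : CompleteSpace Y := hYclosed.completeSpace_coe
  set F : W →L[ℂ] Z := fderiv ℂ Lam 0 with hF
  set T : W →L[ℂ] Y := Q'.comp F with hT
  have h0ball : (0 : W) ∈ Metric.ball (0 : W) cA := by simpa using hcA
  -- T coe
  have hTcoe : ∀ w : W, ((T w : Z)) = F w := by
    intro w
    have hmem : F w ∈ Y := by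
      rw [← SetLike.mem_coe, hYrange]; exact ⟨w, rfl⟩
    have : Q' ((⟨F w, hmem⟩ : Y) : Z) = ⟨F w, hmem⟩ := hQ' _
    simpa [hT] using congrArg (Subtype.val) this
  have hker : T.ker = ⊥ := by
    refine LinearMap.ker_eq_bot.mpr fun w w' h => ?_
    have h2 : T w = T w' := h
    exact hinj (by rw [← hTcoe, ← hTcoe, h2])
  have hrange : T.range = ⊤ := by
    rw [LinearMap.range_eq_top]
    intro y
    obtain ⟨w, hw⟩ : (y : Z) ∈ Set.range F := by rw [← hYrange]; exact y.2
    exact ⟨w, Subtype.ext (by exact (hTcoe w).trans hw)⟩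
  set e : W ≃L[ℂ] Y := ContinuousLinearEquiv.ofBijective T hker hrange with he
  have hecoe : (e : W →L[ℂ] Y) = T := ContinuousLinearEquiv.coe_ofBijective _ _ _
  set E : W → Y := fun B => Q' (Lam B - Lam 0) with hEdef
  have hEan : AnalyticOnNhd ℂ E (Metric.ball (0 : W) cA) := fun x hx =>
    (Q'.analyticAt _).comp ((hLam x hx).sub analyticAt_const)
  -- derivative of E on ball
  have hD : ∀ x ∈ Metric.ball (0 : W) cA,
      HasFDerivAt E (Q'.comp (fderiv ℂ Lam x)) x := by
    intro x hx
    have h1 : HasFDerivAt Lam (fderiv ℂ Lam x) x :=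
      ((hLam x hx).differentiableAt).hasFDerivAt
    have h2 : HasFDerivAt (fun B => Lam B - Lam 0) (fderiv ℂ Lam x) x := h1.sub_const _
    exact (Q'.hasFDerivAt.comp x h2 : _)
  have hfderivE : ∀ x ∈ Metric.ball (0 : W) cA,
      fderiv ℂ E x = Q'.comp (fderiv ℂ Lam x) := fun x hx => (hD x hx).fderiv
  -- strict derivative at 0
  have hstrict : HasStrictFDerivAt E (e : W →L[ℂ] Y) 0 := by
    have h := (hEan 0 h0ball).hasStrictFDerivAt
    rwa [hfderivE 0 h0ball, ← hF, ← hT, ← hecoe] at h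
  -- invertibility neighborhood
  set P : Z →L[ℂ] W := (e.symm : Y →L[ℂ] W).comp Q' with hP
  set g : W → (W →L[ℂ] W) := fun x => P.comp (fderiv ℂ Lam x) with hg
  have hgcont : ContinuousOn g (Metric.ball (0 : W) cA) := by
    have h1 : ContinuousOn (fderiv ℂ Lam) (Metric.ball (0 : W) cA) := fun x hx =>
      ((hLam.fderiv x hx).continuousAt).continuousWithinAt
    exact ((ContinuousLinearMap.compL ℂ W Z W P).continuous).comp_continuousOn h1
  set V : Set W := Metric.ball (0 : W) cA ∩ g ⁻¹' {u | IsUnit u} with hV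
  have hVopen : IsOpen V :=
    hgcont.isOpen_inter_preimage Metric.isOpen_ball Units.isOpen
  have hg0 : g 0 = 1 := by
    ext w
    have h1 : Q' (F w) = e w := rfl
    simp [hg, hP, ← hF, ContinuousLinearMap.one_def, h1]
  have h0V : (0 : W) ∈ V := ⟨h0ball, by simp [Set.mem_preimage, hg0]⟩
  -- partial homeomorph
  set φ := hstrict.toOpenPartialHomeomorph E with hφ
  have hφcoe : (φ : W → Y) = E := hstrict.toOpenPartialHomeomorph_coe
  set ψ := φ.restrOpen V hVopen with hψ
  have hψcoe : (ψ : W → Y) = E := hφcoe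
  have hψsource : ψ.source = φ.source ∩ V := φ.restrOpen_source V hVopen
  have h0src : (0 : W) ∈ ψ.source := by
    rw [hψsource]
    exact ⟨hstrict.mem_toOpenPartialHomeomorph_source, h0V⟩
  have hsub : ψ.source ⊆ Metric.ball (0 : W) cA := by
    rw [hψsource]; exact fun x hx => hx.2.1
  have hE0 : E 0 = 0 := by simp [hEdef]
  refine ⟨ψ.source, ψ.target, ψ.open_source, ψ.open_target, h0src, ?_, hsub, ?_, ?_,
    ψ.symm, ?_, ?_, ?_⟩
  · have := ψ.map_source h0src
    rwa [hψcoe, hE0] at this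
  · have := ψ.injOn
    rwa [hψcoe] at this
  · have := ψ.image_source_eq_target
    rwa [hψcoe] at this
  · -- analyticity of the inverse
    intro y hy
    have hxsrc : ψ.symm y ∈ ψ.source := ψ.map_target hy
    have hxV : ψ.symm y ∈ V := (hψsource ▸ hxsrc).2
    have hxball : ψ.symm y ∈ Metric.ball (0 : W) cA := hxV.1
    have hu : IsUnit (g (ψ.symm y)) := hxV.2
    set i : W ≃L[ℂ] Y := (ContinuousLinearEquiv.ofUnit hu.unit).trans e with hi
    have hfd : fderiv ℂ (ψ : W → Y) (ψ.symm y) = (i : W →L[ℂ] Y) := by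
      rw [hψcoe, hfderivE _ hxball]
      ext w
      have key : Q' (fderiv ℂ Lam (ψ.symm y) w) = i w := by
        have h1 : i w = e ((hu.unit : W →L[ℂ] W) w) := rfl
        rw [h1, IsUnit.unit_spec]
        show Q' (fderiv ℂ Lam (ψ.symm y) w)
          = e (P (fderiv ℂ Lam (ψ.symm y) w))
        simp [hP, ContinuousLinearEquiv.apply_symm_apply]
      exact congrArg Subtype.val key
    have han : AnalyticAt ℂ (ψ : W → Y) (ψ.symm y) := by
      rw [hψcoe]; exact hEan _ hxball
    exact ψ.analyticAt_symm hy han hfd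
  · intro B hB
    have := ψ.left_inv hB
    rwa [hψcoe] at this
  · intro y hy
    have := ψ.right_inv hy
    rwa [hψcoe] at this

end
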